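/- Let Θ ∈ R^{N×N} be symmetric positive definite and let S be an upper-triangular sparsity pattern containing all diagonal indices (j,j). Among all upper triangular matrices Û supported on S, the KL divergence KL(N(0,Θ) || N(0,(ÛÛ^T)^{-1})) is minimized column-wise by U_{s_j, j} = Θ_{s_j,s_j}^{-1} e_{#s_j} / sqrt( e_{#s_j}^T Θ_{s_j,s_j}^{-1} e_{#s_j} ), where s_j = {i : (i,j) ∈ S} and e_{#s_j} is the last standard basis vector in R^{#s_j}. -/

import Mathlib

open Matrix

/-- For an upper-triangular sparsity pattern `S`, `sset S j = {i : (i,j) ∈ S}` is the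
sparsity set of column `j`. -/
def sset {N : ℕ} (S : Finset (Fin N × Fin N)) (j : Fin N) : Finset (Fin N) :=
  Finset.univ.filter (fun i => (i, j) ∈ S)

/-- The principal submatrix `Θ_{s_j, s_j}`. -/
def subΘ {N : ℕ} (Θ : Matrix (Fin N) (Fin N) ℝ) (S : Finset (Fin N × Fin N)) (j : Fin N) :
    Matrix {x // x ∈ sset S j} {x // x ∈ sset S j} ℝ :=
  Θ.submatrix (fun i : {x // x ∈ sset S j} => (i : Fin N))
    (fun i : {x // x ∈ sset S j} => (i : Fin N))

/-- The standard basis vector `e_{#s_j}` of `ℝ^{s_j}` putting mass `1` on the "last"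
index of `s_j`, i.e. on `j` itself (since `s_j ⊆ {1,…,j}` with `j ∈ s_j`). -/
def lastBasis {N : ℕ} (S : Finset (Fin N × Fin N)) (j : Fin N) : {x // x ∈ sset S j} → ℝ :=
  fun q => if (q : Fin N) = j then 1 else 0

/-- The KL-optimal column formula: `U_{s_j, j} = Θ_{s_j,s_j}⁻¹ e / sqrt(eᵀ Θ_{s_j,s_j}⁻¹ e)`,
and `U i j = 0` for `(i,j) ∉ S`. -/
noncomputable def optU {N : ℕ} (Θ : Matrix (Fin N) (Fin N) ℝ) (S : Finset (Fin N × Fin N)) :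
    Matrix (Fin N) (Fin N) ℝ :=
  fun i j =>
    if h : (i, j) ∈ S then
      ((subΘ Θ S j)⁻¹ *ᵥ lastBasis S j) ⟨i, Finset.mem_filter.mpr ⟨Finset.mem_univ i, h⟩⟩ /
        Real.sqrt (lastBasis S j ⬝ᵥ ((subΘ Θ S j)⁻¹ *ᵥ lastBasis S j))
    else 0

/-- The KL divergence `KL( N(0,Θ) ‖ N(0,(VVᵀ)⁻¹) ) = (1/2)[-log det(VᵀΘV) + tr(VᵀΘV) - N]`
expressed through the factor `V`. -/
noncomputable def klObj {N : ℕ} (Θ V : Matrix (Fin N) (Fin N) ℝ) : ℝ :=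
  (1 / 2) * (-Real.log ((Vᵀ * Θ * V).det) + (Vᵀ * Θ * V).trace - N)

section Aux

lemma symm_dot {n : Type*} [Fintype n] {A : Matrix n n ℝ}
    (hsym : ∀ i k, A i k = A k i) (y w : n → ℝ) :
    y ⬝ᵥ A *ᵥ w = w ⬝ᵥ A *ᵥ y := by
  simp only [dotProduct, mulVec, Finset.mul_sum]
  rw [Finset.sum_comm]
  refine Finset.sum_congr rfl fun i _ => Finset.sum_congr rfl fun k _ => ?_
  rw [hsym k i]; ring

lemma hermitian_symm {n : Type*} {A : Matrix n n ℝ} (hA : A.IsHermitian) :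
    ∀ i k, A i k = A k i := fun i k => by
  simpa using (hA.apply i k).symm

lemma cs_psd {n : Type*} [Fintype n] {A : Matrix n n ℝ} (hA : A.PosSemidef)
    (y w : n → ℝ) : (y ⬝ᵥ A *ᵥ w) ^ 2 ≤ (y ⬝ᵥ A *ᵥ y) * (w ⬝ᵥ A *ᵥ w) := by
  have hsym := hermitian_symm hA.1
  have key : ∀ x : ℝ, 0 ≤ (w ⬝ᵥ A *ᵥ w) * (x * x) + (2 * (y ⬝ᵥ A *ᵥ w)) * x + (y ⬝ᵥ A *ᵥ y) := by
    intro x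
    have h0 := hA.dotProduct_mulVec_nonneg (y + x • w)
    simp only [star_trivial, mulVec_add, mulVec_smul, dotProduct_add, add_dotProduct,
      dotProduct_smul, smul_dotProduct, smul_eq_mul] at h0
    rw [symm_dot hsym w y] at h0
    nlinarith [h0]
  have hd := discrim_le_zero key
  rw [discrim] at hd
  nlinarith [hd]

lemma quad_restrict {N : ℕ} (Θ : Matrix (Fin N) (Fin N) ℝ) (s : Finset (Fin N))
    (v : Fin N → ℝ) (hv : ∀ i ∉ s, v i = 0) :
    v ⬝ᵥ Θ *ᵥ v =
      (fun q : {x // x ∈ s} => v q) ⬝ᵥ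
        ((Θ.submatrix ((↑) : {x // x ∈ s} → Fin N) ((↑) : {x // x ∈ s} → Fin N)) *ᵥ
          (fun q : {x // x ∈ s} => v q)) := by
  have inner : ∀ i : Fin N, (Θ *ᵥ v) i = ∑ r : {x // x ∈ s}, Θ i r * v r := by
    intro i
    simp only [mulVec, dotProduct]
    calc ∑ k, Θ i k * v k = ∑ k ∈ s, Θ i k * v k :=
          (Finset.sum_subset s.subset_univ (fun k _ hk => by rw [hv k hk, mul_zero])).symm
      _ = ∑ r : {x // x ∈ s}, Θ i r * v r := (Finset.sum_coe_sort s _).symm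
  have hrhs : (fun q : {x // x ∈ s} => v q) ⬝ᵥ
        ((Θ.submatrix ((↑) : {x // x ∈ s} → Fin N) ((↑) : {x // x ∈ s} → Fin N)) *ᵥ
          (fun q : {x // x ∈ s} => v q)) =
      ∑ q : {x // x ∈ s}, v q * ∑ r : {x // x ∈ s}, Θ q r * v r := by
    simp only [dotProduct, mulVec, submatrix_apply]
  rw [hrhs]
  calc v ⬝ᵥ (Θ *ᵥ v) = ∑ i, v i * (Θ *ᵥ v) i := rfl
    _ = ∑ i ∈ s, v i * (Θ *ᵥ v) i :=
        (Finset.sum_subset s.subset_univ (fun k _ hk => by rw [hv k hk, zero_mul])).symm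
    _ = ∑ q : {x // x ∈ s}, v q * (Θ *ᵥ v) q := (Finset.sum_coe_sort s _).symm
    _ = ∑ q : {x // x ∈ s}, v q * ∑ r : {x // x ∈ s}, Θ q r * v r :=
        Finset.sum_congr rfl fun q _ => by rw [inner]

lemma posdef_submatrix {N : ℕ} {Θ : Matrix (Fin N) (Fin N) ℝ} (hΘ : Θ.PosDef)
    (s : Finset (Fin N)) :
    (Θ.submatrix ((↑) : {x // x ∈ s} → Fin N) ((↑) : {x // x ∈ s} → Fin N)).PosDef := by
  refine PosDef.of_dotProduct_mulVec_pos (hΘ.1.submatrix _) fun x hx => ?_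
  classical
  set v : Fin N → ℝ := fun i => if h : i ∈ s then x ⟨i, h⟩ else 0 with hvdef
  have hv0 : ∀ i ∉ s, v i = 0 := fun i hi => by simp [v, hi]
  have hvq : ∀ q : {x // x ∈ s}, v q = x q := fun q => by simp [v, q.2]
  have hvne : v ≠ 0 := by
    intro h0
    apply hx
    funext q
    have := congrFun h0 q
    simpa [hvq q] using this
  have h1 := hΘ.dotProduct_mulVec_pos hvne
  have hsv : star v = v := by funext i; simp
  rw [hsv] at h1
  have hq := quad_restrict Θ s v hv0
  have hxeq : (fun q : {x // x ∈ s} => v q) = x := funext hvq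
  rw [hxeq] at hq
  have hsx : star x = x := by funext i; simp
  rw [hsx, ← hq]
  exact h1

lemma klObj_decomp {N : ℕ} (Θ : Matrix (Fin N) (Fin N) ℝ) (hΘ : Θ.PosDef)
    (W : Matrix (Fin N) (Fin N) ℝ) (hWut : ∀ i j, W i j ≠ 0 → i ≤ j)
    (hWd : ∀ j, W j j ≠ 0) :
    klObj Θ W = (1 / 2) * (-Real.log Θ.det +
      (∑ j, (-Real.log ((W j j) ^ 2) + (fun i => W i j) ⬝ᵥ Θ *ᵥ (fun i => W i j))) - N) := by
  have hbt : W.BlockTriangular id := by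
    intro i j h
    by_contra hne
    exact absurd (hWut i j hne) (not_le.mpr h)
  have hdetW : W.det = ∏ j, W j j := det_of_upperTriangular hbt
  have hdet : (Wᵀ * Θ * W).det = Θ.det * ∏ j, (W j j) ^ 2 := by
    rw [det_mul, det_mul, det_transpose, hdetW, Finset.prod_pow]
    ring
  have hprodne : (∏ j, (W j j) ^ 2) ≠ 0 :=
    Finset.prod_ne_zero_iff.mpr fun j _ => pow_ne_zero 2 (hWd j)
  have hlog : Real.log (Wᵀ * Θ * W).det = Real.log Θ.det + ∑ j, Real.log ((W j j) ^ 2) := by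
    rw [hdet, Real.log_mul hΘ.det_pos.ne' hprodne,
      Real.log_prod (fun j _ => pow_ne_zero 2 (hWd j))]
  have htr : (Wᵀ * Θ * W).trace = ∑ j, (fun i => W i j) ⬝ᵥ Θ *ᵥ (fun i => W i j) := by
    simp only [trace, diag_apply, mul_apply, transpose_apply, dotProduct, mulVec,
      Finset.sum_mul, Finset.mul_sum]
    refine Finset.sum_congr rfl fun j _ => ?_
    rw [Finset.sum_comm]
    exact Finset.sum_congr rfl fun i _ => Finset.sum_congr rfl fun k _ => by ring
  have hsplit : (∑ j, (-Real.log ((W j j) ^ 2) + (fun i => W i j) ⬝ᵥ Θ *ᵥ (fun i => W i j)))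
      = -(∑ j, Real.log ((W j j) ^ 2)) + ∑ j, (fun i => W i j) ⬝ᵥ Θ *ᵥ (fun i => W i j) := by
    rw [Finset.sum_add_distrib, Finset.sum_neg_distrib]
  unfold klObj
  rw [hlog, htr, hsplit]
  ring

end Aux

theorem stmt_7 {N : ℕ} (Θ : Matrix (Fin N) (Fin N) ℝ) (hΘ : Θ.PosDef)
    (S : Finset (Fin N × Fin N))
    (hSut : ∀ p ∈ S, p.1 ≤ p.2)
    (hSdiag : ∀ j : Fin N, (j, j) ∈ S) :
    ∀ V : Matrix (Fin N) (Fin N) ℝ,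
      (∀ i j : Fin N, V i j ≠ 0 → (i, j) ∈ S) →
      (∀ j : Fin N, V j j ≠ 0) →
      klObj Θ (optU Θ S) ≤ klObj Θ V := by
  intro V hVs hVd
  classical
  have hcol : ∀ j : Fin N,
      optU Θ S j j ≠ 0 ∧
      -Real.log ((optU Θ S j j) ^ 2) +
          (fun i => optU Θ S i j) ⬝ᵥ Θ *ᵥ (fun i => optU Θ S i j)
        ≤ -Real.log ((V j j) ^ 2) + (fun i => V i j) ⬝ᵥ Θ *ᵥ (fun i => V i j) := by
    intro j
    set s : Finset (Fin N) := sset S j with hsdef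
    have hjs : j ∈ s := Finset.mem_filter.mpr ⟨Finset.mem_univ j, hSdiag j⟩
    set A : Matrix {x // x ∈ s} {x // x ∈ s} ℝ := subΘ Θ S j with hAdef
    have hAsub : A = Θ.submatrix ((↑) : {x // x ∈ s} → Fin N) ((↑) : {x // x ∈ s} → Fin N) :=
      rfl
    have hA : A.PosDef := hAsub ▸ posdef_submatrix hΘ s
    have hAinv : A⁻¹.PosDef := hA.inv
    set e : {x // x ∈ s} → ℝ := lastBasis S j with hedef
    set y : {x // x ∈ s} → ℝ := A⁻¹ *ᵥ e with hydef
    set c : ℝ := e ⬝ᵥ y with hcdef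
    have hene : e ≠ 0 := by
      intro h0
      have := congrFun h0 ⟨j, hjs⟩
      simp [e, lastBasis] at this
    have hc : 0 < c := by
      have h1 := hAinv.dotProduct_mulVec_pos hene
      have hse : star e = e := by funext q; simp
      rw [hse] at h1
      exact h1
    have hedot : ∀ w : {x // x ∈ s} → ℝ, e ⬝ᵥ w = w ⟨j, hjs⟩ := by
      intro w
      have hterm : ∀ q : {x // x ∈ s}, e q * w q = if q = ⟨j, hjs⟩ then w q else 0 := by
        intro q
        by_cases h : q = ⟨j, hjs⟩
        · subst h; simp [e, lastBasis]
        · have hq : (q : Fin N) ≠ j := fun hq => h (Subtype.ext hq)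
          simp [e, lastBasis, hq, h]
      calc e ⬝ᵥ w = ∑ q, e q * w q := rfl
        _ = ∑ q, if q = ⟨j, hjs⟩ then w q else 0 := Finset.sum_congr rfl fun q _ => hterm q
        _ = w ⟨j, hjs⟩ := by simp
    have hsymA := hermitian_symm hA.1
    have hdetu : IsUnit A.det := hA.det_pos.ne'.isUnit
    have hAy : A *ᵥ y = e := by
      rw [hydef, mulVec_mulVec, mul_nonsing_inv A hdetu, one_mulVec]
    have hyAy : y ⬝ᵥ A *ᵥ y = c := by rw [hAy, hcdef, dotProduct_comm]
    have hcsqrt : 0 < Real.sqrt c := Real.sqrt_pos.mpr hc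
    -- the optU column
    set u : Fin N → ℝ := fun i => optU Θ S i j with hudef
    have hu0 : ∀ i ∉ s, u i = 0 := by
      intro i hi
      have hiS : (i, j) ∉ S := fun h => hi (Finset.mem_filter.mpr ⟨Finset.mem_univ i, h⟩)
      simp [u, optU, hiS]
    have huq : ∀ q : {x // x ∈ s}, u q = y q / Real.sqrt c := by
      intro q
      have hqS : ((q : Fin N), j) ∈ S := (Finset.mem_filter.mp q.2).2
      simp only [u, optU, dif_pos hqS]
      rfl
    have hyj : y ⟨j, hjs⟩ = c := by rw [hcdef, hedot y]
    have hujj : u j = Real.sqrt c := by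
      have h1 := huq ⟨j, hjs⟩
      rw [hyj] at h1
      rw [show u j = u ((⟨j, hjs⟩ : {x // x ∈ s}) : Fin N) from rfl, h1, Real.div_sqrt]
    have hune : u j ≠ 0 := by rw [hujj]; exact hcsqrt.ne'
    have hquadu : u ⬝ᵥ Θ *ᵥ u = 1 := by
      rw [quad_restrict Θ s u hu0, ← hAsub]
      have hw : (fun q : {x // x ∈ s} => u q) = (Real.sqrt c)⁻¹ • y := by
        funext q
        rw [huq q]
        simp [div_eq_inv_mul]
      rw [hw, smul_dotProduct, mulVec_smul, dotProduct_smul, smul_eq_mul, smul_eq_mul, hyAy]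
      have hss : Real.sqrt c * Real.sqrt c = c := Real.mul_self_sqrt hc.le
      field_simp
      rw [Real.sq_sqrt hc.le]
    have hlogu : -Real.log ((u j) ^ 2) + u ⬝ᵥ Θ *ᵥ u = -Real.log c + 1 := by
      rw [hquadu, hujj, Real.sq_sqrt hc.le]
    -- the V column
    set v : Fin N → ℝ := fun i => V i j with hvdef
    have hv0 : ∀ i ∉ s, v i = 0 := by
      intro i hi
      by_contra h
      exact hi (Finset.mem_filter.mpr ⟨Finset.mem_univ i, hVs i j h⟩)
    set wv : {x // x ∈ s} → ℝ := fun q => v q with hwvdef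
    have hquadv : v ⬝ᵥ Θ *ᵥ v = wv ⬝ᵥ A *ᵥ wv := by
      rw [quad_restrict Θ s v hv0, ← hAsub]
    have hwvne : wv ≠ 0 := by
      intro h0
      apply hVd j
      have := congrFun h0 ⟨j, hjs⟩
      simpa [wv, v] using this
    have hb : 0 < wv ⬝ᵥ A *ᵥ wv := by
      have h1 := hA.dotProduct_mulVec_pos hwvne
      have hsw : star wv = wv := by funext q; simp
      rw [hsw] at h1
      exact h1
    have hVjj : V j j = y ⬝ᵥ A *ᵥ wv := by
      have h1 : V j j = e ⬝ᵥ wv := (hedot wv).symm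
      rw [h1, ← hAy, dotProduct_comm, symm_dot hsymA wv y]
    have hcs : (V j j) ^ 2 ≤ c * (wv ⬝ᵥ A *ᵥ wv) := by
      rw [hVjj]
      have h1 := cs_psd hA.posSemidef y wv
      rwa [hyAy] at h1
    have hVsq : 0 < (V j j) ^ 2 :=
      lt_of_le_of_ne (sq_nonneg (V j j)) (Ne.symm (pow_ne_zero 2 (hVd j)))
    have hineq : -Real.log c + 1 ≤ -Real.log ((V j j) ^ 2) + v ⬝ᵥ Θ *ᵥ v := by
      rw [hquadv]
      have h1 : Real.log ((V j j) ^ 2) ≤ Real.log c + Real.log (wv ⬝ᵥ A *ᵥ wv) := by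
        rw [← Real.log_mul hc.ne' hb.ne']
        exact Real.log_le_log hVsq hcs
      have h2 := Real.log_le_sub_one_of_pos hb
      linarith
    exact ⟨hune, by rw [show optU Θ S j j = u j from rfl, hlogu]; exact hineq⟩
  have hUs : ∀ i j : Fin N, optU Θ S i j ≠ 0 → (i, j) ∈ S := by
    intro i j h
    by_contra hS
    simp [optU, hS] at h
  have hUut : ∀ i j : Fin N, optU Θ S i j ≠ 0 → i ≤ j := fun i j h => hSut _ (hUs i j h)
  have hVut : ∀ i j : Fin N, V i j ≠ 0 → i ≤ j := fun i j h => hSut _ (hVs i j h)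
  have hUd : ∀ j : Fin N, optU Θ S j j ≠ 0 := fun j => (hcol j).1
  rw [klObj_decomp Θ hΘ _ hUut hUd, klObj_decomp Θ hΘ V hVut hVd]
  have hsum := Finset.sum_le_sum (fun j (_ : j ∈ (Finset.univ : Finset (Fin N))) => (hcol j).2)
  linarith
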